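/- Scaling structure of the Fourier amplification matrix: with σ_a = 0, for all s, r ≥ 1 the amplification matrix G^{(s,r)}(ε, σ_{s,m}, h, Δt; ξ) of the IMEX-BDF s-step DG scheme is similar (via an explicit block-diagonal scaling S_h = diag(σ_{s,m} h I_r, I_{rN_v}) repeated blockwise) to a matrix Ĝ^{(s,r)} depending on the parameters only through the two ratios ε/(σ_{s,m} h) and Δt/(ε h). Consequently the eigenvalues of G^{(s,r)} depend on (ε, σ_{s,m}, h, Δt) only through these two ratios. -/

import Mathlib

open Finset Matrix

/-- Index type for one Fourier unknown vector `(ρ̂, ĝ_1, …, ĝ_{N_v})`, each component having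
`r` modal coefficients. -/
abbrev fIdx (r Nv : ℕ) := Fin r ⊕ (Fin Nv × Fin r)

/-- The block `G_{L,s}` of the Fourier-transformed IMEX-BDF-DG scheme (σ_a = 0). -/
noncomputable def GLblock (r Nv : ℕ) (Mhat Dp : Matrix (Fin r) (Fin r) ℂ)
    (ω v : Fin Nv → ℝ) (ε σ hm Δt c : ℝ) :
    Matrix (fIdx r Nv) (fIdx r Nv) ℂ :=
  Matrix.fromBlocks (((hm : ℝ) : ℂ) • Mhat)
    (Matrix.of fun i qj => ((Δt * c * ω qj.1 * v qj.1 : ℝ) : ℂ) * Dp i qj.2)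
    0
    (Matrix.of fun qi qj =>
      if qi.1 = qj.1 then ((hm * (ε ^ 2 + Δt * c * σ) : ℝ) : ℂ) * Mhat qi.2 qj.2 else 0)

/-- The block `G_{R,n+k}` of the Fourier-transformed IMEX-BDF-DG scheme (σ_a = 0), with
BDF coefficients `ak = a_k`, `bk = b_k`. -/
noncomputable def GRblock (r Nv : ℕ) (Mhat Dm : Matrix (Fin r) (Fin r) ℂ)
    (Uhat Phat : Fin Nv → Matrix (Fin r) (Fin r) ℂ) (v : Fin Nv → ℝ)
    (ak bk : ℝ) (ε hm Δt : ℝ) : Matrix (fIdx r Nv) (fIdx r Nv) ℂ :=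
  Matrix.fromBlocks (((ak * hm : ℝ) : ℂ) • Mhat) 0
    (Matrix.of fun qi j => ((-(v qi.1) * Δt * bk : ℝ) : ℂ) * Dm qi.2 j)
    (Matrix.of fun qi qj =>
      (if qi.1 = qj.1 then
          ((ak * ε ^ 2 * hm : ℝ) : ℂ) * Mhat qi.2 qj.2
            - ((ε * Δt * bk : ℝ) : ℂ) * Uhat qi.1 qi.2 qj.2
        else 0)
      + ((ε * Δt * bk : ℝ) : ℂ) * Phat qj.1 qi.2 qj.2)

/-- The companion matrix `𝒢_L` of the `s`-step scheme. -/
noncomputable def bigGL (s r Nv : ℕ) (Mhat Dp : Matrix (Fin r) (Fin r) ℂ)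
    (ω v : Fin Nv → ℝ) (ε σ hm Δt c : ℝ) :
    Matrix (Fin s × fIdx r Nv) (Fin s × fIdx r Nv) ℂ :=
  Matrix.of fun pi pj =>
    if (pi.1 : ℕ) = 0 then
      (if (pj.1 : ℕ) = 0 then GLblock r Nv Mhat Dp ω v ε σ hm Δt c pi.2 pj.2 else 0)
    else (if pi = pj then 1 else 0)

/-- The companion matrix `𝒢_R` of the `s`-step scheme; the column block `p'` carries the
coefficient index `k = s − 1 − p'` (`Fin.rev`). -/
noncomputable def bigGR (s r Nv : ℕ) (Mhat Dm : Matrix (Fin r) (Fin r) ℂ)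
    (Uhat Phat : Fin Nv → Matrix (Fin r) (Fin r) ℂ) (v : Fin Nv → ℝ)
    (a b : Fin s → ℝ) (ε hm Δt : ℝ) :
    Matrix (Fin s × fIdx r Nv) (Fin s × fIdx r Nv) ℂ :=
  Matrix.of fun pi pj =>
    if (pi.1 : ℕ) = 0 then
      GRblock r Nv Mhat Dm Uhat Phat v (a pj.1.rev) (b pj.1.rev) ε hm Δt pi.2 pj.2
    else (if ((pj.1 : ℕ) + 1 = (pi.1 : ℕ) ∧ pi.2 = pj.2) then 1 else 0)

/-- The amplification matrix `G^{(s,r)} = 𝒢_L⁻¹ 𝒢_R`. -/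
noncomputable def amplification (s r Nv : ℕ) (Mhat Dp Dm : Matrix (Fin r) (Fin r) ℂ)
    (Uhat Phat : Fin Nv → Matrix (Fin r) (Fin r) ℂ) (ω v : Fin Nv → ℝ)
    (a b : Fin s → ℝ) (ε σ hm Δt c : ℝ) :
    Matrix (Fin s × fIdx r Nv) (Fin s × fIdx r Nv) ℂ :=
  (bigGL s r Nv Mhat Dp ω v ε σ hm Δt c)⁻¹ *
    bigGR s r Nv Mhat Dm Uhat Phat v a b ε hm Δt

/-- The blockwise scaling `S_h = diag(σ h I_r, I_{r N_v})`, repeated over the `s` blocks. -/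
noncomputable def scalingS (s r Nv : ℕ) (σ hm : ℝ) :
    Matrix (Fin s × fIdx r Nv) (Fin s × fIdx r Nv) ℂ :=
  Matrix.of fun pi pj =>
    if pi = pj then (Sum.elim (fun _ => ((σ * hm : ℝ) : ℂ)) (fun _ => 1) pi.2) else 0


section auxLemmas

/-- Diagonal row-scaling used in the similarity computation. -/
noncomputable def evec (s r Nv : ℕ) (σ hm : ℝ) : Fin s × fIdx r Nv → ℂ :=
  fun pi => if (pi.1 : ℕ) = 0 then
    Sum.elim (fun _ => ((hm : ℝ) : ℂ)) (fun _ => ((σ ^ 2 * hm ^ 3 : ℝ) : ℂ)) pi.2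
  else 1

lemma scalingS_eq_diagonal (s r Nv : ℕ) (σ hm : ℝ) :
    scalingS s r Nv σ hm
      = Matrix.diagonal (fun pi : Fin s × fIdx r Nv =>
          Sum.elim (fun _ => ((σ * hm : ℝ) : ℂ)) (fun _ => 1) pi.2) := rfl

lemma conj_amp {n : Type*} [Fintype n] [DecidableEq n]
    (S E L R L0 R0 : Matrix n n ℂ)
    (hS : IsUnit S.det) (hE : IsUnit E.det)
    (h1 : L * S = S * E * L0) (h2 : R * S = S * E * R0) :
    S⁻¹ * (L⁻¹ * R) * S = L0⁻¹ * R0 := by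
  have hL : L = S * E * L0 * S⁻¹ := by
    rw [← h1, Matrix.mul_nonsing_inv_cancel_right _ _ hS]
  have hR : R = S * E * R0 * S⁻¹ := by
    rw [← h2, Matrix.mul_nonsing_inv_cancel_right _ _ hS]
  have hLi : L⁻¹ = S * (L0⁻¹ * (E⁻¹ * S⁻¹)) := by
    rw [hL, Matrix.mul_inv_rev, Matrix.nonsing_inv_nonsing_inv _ hS,
      Matrix.mul_inv_rev, Matrix.mul_inv_rev]
  rw [hLi, hR]
  simp only [Matrix.mul_assoc]
  rw [Matrix.nonsing_inv_mul_cancel_left _ _ hS]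
  simp only [Matrix.nonsing_inv_mul_cancel_left _ _ hS,
    Matrix.nonsing_inv_mul_cancel_left _ _ hE, Matrix.nonsing_inv_mul _ hS,
    Matrix.mul_one]

lemma GLkey (s r Nv : ℕ) (Mhat Dp : Matrix (Fin r) (Fin r) ℂ)
    (ω v : Fin Nv → ℝ) (ε σ hm Δt c : ℝ)
    (hε : ε ≠ 0) (hσ : σ ≠ 0) (hhm : hm ≠ 0) :
    bigGL s r Nv Mhat Dp ω v ε σ hm Δt c * scalingS s r Nv σ hm
      = scalingS s r Nv σ hm * Matrix.diagonal (evec s r Nv σ hm) *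
        bigGL s r Nv Mhat Dp ω v (ε / (σ * hm)) 1 1
          ((ε / (σ * hm)) * (Δt / (ε * hm))) c := by
  have hε' : (ε : ℂ) ≠ 0 := Complex.ofReal_ne_zero.mpr hε
  have hσ' : (σ : ℂ) ≠ 0 := Complex.ofReal_ne_zero.mpr hσ
  have hhm' : (hm : ℂ) ≠ 0 := Complex.ofReal_ne_zero.mpr hhm
  rw [scalingS_eq_diagonal, Matrix.diagonal_mul_diagonal]
  ext pi pj
  rw [Matrix.mul_diagonal, Matrix.diagonal_mul]
  obtain ⟨p, ij⟩ := pi; obtain ⟨p', ij'⟩ := pj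
  simp only [bigGL, GLblock, Matrix.of_apply, evec]
  by_cases hp : (p : ℕ) = 0
  · by_cases hp' : (p' : ℕ) = 0
    · simp only [hp, hp', if_true]
      rcases ij with i | qi <;> rcases ij' with j | qj <;>
        simp only [Matrix.fromBlocks_apply₁₁, Matrix.fromBlocks_apply₁₂,
          Matrix.fromBlocks_apply₂₁, Matrix.fromBlocks_apply₂₂,
          Matrix.smul_apply, Matrix.of_apply, Matrix.zero_apply, Sum.elim_inl,
          Sum.elim_inr, smul_eq_mul]
      · push_cast
        ring
      · push_cast
        field_simp [hε', hσ', hhm']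
      · ring
      · split_ifs with h
        · push_cast
          field_simp [hε', hσ', hhm']
        · ring
    · simp [hp, hp']
  · simp only [hp, if_false]
    by_cases hpq : ((p, ij) : Fin s × fIdx r Nv) = (p', ij')
    · obtain ⟨rfl, rfl⟩ := Prod.mk.injEq .. ▸ Prod.ext_iff.mp hpq
      simp
    · simp [hpq]

lemma GRkey (s r Nv : ℕ) (Mhat Dm : Matrix (Fin r) (Fin r) ℂ)
    (Uhat Phat : Fin Nv → Matrix (Fin r) (Fin r) ℂ) (v : Fin Nv → ℝ)
    (a b : Fin s → ℝ) (ε σ hm Δt : ℝ)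
    (hε : ε ≠ 0) (hσ : σ ≠ 0) (hhm : hm ≠ 0) :
    bigGR s r Nv Mhat Dm Uhat Phat v a b ε hm Δt * scalingS s r Nv σ hm
      = scalingS s r Nv σ hm * Matrix.diagonal (evec s r Nv σ hm) *
        bigGR s r Nv Mhat Dm Uhat Phat v a b (ε / (σ * hm)) 1
          ((ε / (σ * hm)) * (Δt / (ε * hm))) := by
  have hε' : (ε : ℂ) ≠ 0 := Complex.ofReal_ne_zero.mpr hε
  have hσ' : (σ : ℂ) ≠ 0 := Complex.ofReal_ne_zero.mpr hσ
  have hhm' : (hm : ℂ) ≠ 0 := Complex.ofReal_ne_zero.mpr hhm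
  rw [scalingS_eq_diagonal, Matrix.diagonal_mul_diagonal]
  ext pi pj
  rw [Matrix.mul_diagonal, Matrix.diagonal_mul]
  obtain ⟨p, ij⟩ := pi; obtain ⟨p', ij'⟩ := pj
  simp only [bigGR, GRblock, Matrix.of_apply, evec]
  by_cases hp : (p : ℕ) = 0
  · simp only [hp, if_true]
    rcases ij with i | qi <;> rcases ij' with j | qj <;>
      simp only [Matrix.fromBlocks_apply₁₁, Matrix.fromBlocks_apply₁₂,
        Matrix.fromBlocks_apply₂₁, Matrix.fromBlocks_apply₂₂,
        Matrix.smul_apply, Matrix.of_apply, Matrix.zero_apply, Sum.elim_inl,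
        Sum.elim_inr, smul_eq_mul]
    · push_cast
      ring
    · ring
    · push_cast
      field_simp [hε', hσ', hhm']
    · split_ifs with h
      · push_cast
        field_simp [hε', hσ', hhm']
      · push_cast
        field_simp [hε', hσ', hhm']
        ring
  · simp only [hp, if_false]
    by_cases hpq : ((p' : ℕ) + 1 = (p : ℕ) ∧ (ij : fIdx r Nv) = ij')
    · obtain ⟨h1, rfl⟩ := hpq
      simp [h1]
    · simp [hpq]

end auxLemmas

set_option maxHeartbeats 2000000 in
/-- Scaling structure of the Fourier amplification matrix (σ_a = 0): conjugating
`G^{(s,r)}(ε, σ_{s,m}, h, Δt)` by the explicit block-diagonal scaling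
`S_h = diag(σ_{s,m} h I_r, I_{r N_v})` yields a matrix `Ĝ^{(s,r)}` depending on the
parameters only through the ratios `ε/(σ_{s,m} h)` and `Δt/(ε h)`; consequently the
spectrum of `G^{(s,r)}` depends only on these two ratios. -/
theorem stmt_12 (s r Nv : ℕ) (hs : 1 ≤ s) (hr : 1 ≤ r)
    (Mhat Dp Dm : Matrix (Fin r) (Fin r) ℂ)
    (Uhat Phat : Fin Nv → Matrix (Fin r) (Fin r) ℂ)
    (ω v : Fin Nv → ℝ)
    (hP : ∀ q, Phat q = ((ω q : ℝ) : ℂ) • Uhat q)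
    (hM : IsUnit Mhat.det)
    (a b : Fin s → ℝ) (c : ℝ) (hc : 0 < c) :
    ∃ Ghat : ℝ → ℝ → Matrix (Fin s × fIdx r Nv) (Fin s × fIdx r Nv) ℂ,
      ∀ ε σ hm Δt : ℝ, 0 < ε → 0 < σ → 0 < hm → 0 < Δt →
        (scalingS s r Nv σ hm)⁻¹ *
            amplification s r Nv Mhat Dp Dm Uhat Phat ω v a b ε σ hm Δt c *
            scalingS s r Nv σ hm
          = Ghat (ε / (σ * hm)) (Δt / (ε * hm)) ∧
        spectrum ℂ (amplification s r Nv Mhat Dp Dm Uhat Phat ω v a b ε σ hm Δt c)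
          = spectrum ℂ (Ghat (ε / (σ * hm)) (Δt / (ε * hm))) := by
  classical
  refine ⟨fun α β => amplification s r Nv Mhat Dp Dm Uhat Phat ω v a b α 1 1 (α * β) c,
    fun ε σ hm Δt hε hσ hhm hΔt => ?_⟩
  have hε0 : ε ≠ 0 := ne_of_gt hε
  have hσ0 : σ ≠ 0 := ne_of_gt hσ
  have hhm0 : hm ≠ 0 := ne_of_gt hhm
  have hσhm : ((σ * hm : ℝ) : ℂ) ≠ 0 := by
    exact_mod_cast mul_ne_zero hσ0 hhm0
  have hSdet : IsUnit (scalingS s r Nv σ hm).det := by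
    rw [scalingS_eq_diagonal, Matrix.det_diagonal]
    refine isUnit_iff_ne_zero.mpr (Finset.prod_ne_zero_iff.mpr fun i _ => ?_)
    rcases i.2 with _ | _ <;> simp [hσ0, hhm0]
  have hEdet : IsUnit (Matrix.diagonal (evec s r Nv σ hm)).det := by
    rw [Matrix.det_diagonal]
    refine isUnit_iff_ne_zero.mpr (Finset.prod_ne_zero_iff.mpr fun i _ => ?_)
    have h1 : ((hm : ℝ) : ℂ) ≠ 0 := Complex.ofReal_ne_zero.mpr hhm0
    have h2 : ((σ ^ 2 * hm ^ 3 : ℝ) : ℂ) ≠ 0 := by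
      exact_mod_cast mul_ne_zero (pow_ne_zero 2 hσ0) (pow_ne_zero 3 hhm0)
    unfold evec
    split_ifs with h
    · rcases i.2 with _ | _ <;> simp [hσ0, hhm0]
    · exact one_ne_zero
  have hmain :
      (scalingS s r Nv σ hm)⁻¹ *
          amplification s r Nv Mhat Dp Dm Uhat Phat ω v a b ε σ hm Δt c *
          scalingS s r Nv σ hm
        = amplification s r Nv Mhat Dp Dm Uhat Phat ω v a b (ε / (σ * hm)) 1 1
            ((ε / (σ * hm)) * (Δt / (ε * hm))) c := by
    unfold amplification
    exact conj_amp _ _ _ _ _ _ hSdet hEdet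
      (GLkey s r Nv Mhat Dp ω v ε σ hm Δt c hε0 hσ0 hhm0)
      (GRkey s r Nv Mhat Dm Uhat Phat v a b ε σ hm Δt hε0 hσ0 hhm0)
  refine ⟨hmain, ?_⟩
  obtain ⟨u, hu⟩ := (Matrix.isUnit_iff_isUnit_det _).mpr hSdet
  have hui : (↑u⁻¹ : Matrix (Fin s × fIdx r Nv) (Fin s × fIdx r Nv) ℂ)
      = (scalingS s r Nv σ hm)⁻¹ := by
    rw [Matrix.coe_units_inv, hu]
  calc spectrum ℂ (amplification s r Nv Mhat Dp Dm Uhat Phat ω v a b ε σ hm Δt c)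
      = spectrum ℂ (↑u⁻¹ *
          amplification s r Nv Mhat Dp Dm Uhat Phat ω v a b ε σ hm Δt c * ↑u) :=
        (spectrum.units_conjugate' (u := u)).symm
    _ = _ := by rw [hui, hu, hmain]
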